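/- Let n ≥ 1 and let μ_1, …, μ_n satisfy 0 < μ_1 ≤ μ_2 ≤ … ≤ μ_n. Let D be the first canonical form matrix of μ and let π be a probability vector such that (π, D) represents the unit exponential distribution. Then π · exp(tD) = e^{−t} · π for all t ≥ 0; equivalently, π · D = −π. In particular, with d := −D·𝟙, one has π·(D + d·π) = 0, i.e. the stationary vector φ of the process restarted with π after each absorption equals the initial vector π. -/

import Mathlib

open Matrix

/-- The first canonical form matrix of rates `μ`: diagonal `-μ i`, superdiagonal `μ i`. -/
def canonD {n : ℕ} (μ : Fin n → ℝ) : Matrix (Fin n) (Fin n) ℝ :=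
  Matrix.of fun i j => if j = i then -μ i else if (j : ℕ) = (i : ℕ) + 1 then μ i else 0

/-- `(π, D)` represents the unit exponential distribution:
`π · exp(tD) · 𝟙 = e^{-t}` for all `t ≥ 0`. -/
def ReprUnitExp {n : ℕ} (π : Fin n → ℝ) (D : Matrix (Fin n) (Fin n) ℝ) : Prop :=
  ∀ t : ℝ, 0 ≤ t → (π ᵥ* NormedSpace.exp (t • D)) ⬝ᵥ (fun _ => 1) = Real.exp (-t)

attribute [local instance] Matrix.linftyOpSemiNormedRing Matrix.linftyOpNormedRing
  Matrix.linftyOpNormedAlgebra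

namespace StmtAux

open NormedSpace

variable {n : ℕ}

lemma canonD_mulVec (μ : Fin n → ℝ) (v : Fin n → ℝ) (i : Fin n) :
    (canonD μ *ᵥ v) i =
      μ i * ((if h : (i : ℕ) + 1 < n then v ⟨(i : ℕ) + 1, h⟩ else 0) - v i) := by
  classical
  have hsplit : ∀ j : Fin n,
      (canonD μ i j) * v j
        = (if j = i then -μ i * v j else 0)
          + (if (j : ℕ) = (i : ℕ) + 1 then μ i * v j else 0) := by
    intro j
    by_cases h1 : j = i
    · subst h1
      have : ¬ ((j : ℕ) = (j : ℕ) + 1) := by omega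
      simp [canonD, this]
    · by_cases h2 : (j : ℕ) = (i : ℕ) + 1 <;> simp [canonD, h1, h2]
  have h1 : ∑ j, (if j = i then -μ i * v j else 0) = -μ i * v i := by
    simp
  have h2 : ∑ j : Fin n, (if (j : ℕ) = (i : ℕ) + 1 then μ i * v j else 0)
      = (if h : (i : ℕ) + 1 < n then μ i * v ⟨(i : ℕ) + 1, h⟩ else 0) := by
    by_cases h : (i : ℕ) + 1 < n
    · rw [dif_pos h]
      rw [Finset.sum_eq_single_of_mem (⟨(i : ℕ) + 1, h⟩ : Fin n) (Finset.mem_univ _)]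
      · simp
      · intro j _ hj
        rw [if_neg]
        intro hc
        exact hj (Fin.ext hc)
    · rw [dif_neg h]
      apply Finset.sum_eq_zero
      intro j _
      rw [if_neg]
      have := j.isLt
      omega
  calc (canonD μ *ᵥ v) i = ∑ j, (canonD μ i j) * v j := rfl
    _ = ∑ j, ((if j = i then -μ i * v j else 0)
          + (if (j : ℕ) = (i : ℕ) + 1 then μ i * v j else 0)) := by
        exact Finset.sum_congr rfl fun j _ => hsplit j
    _ = -μ i * v i + (if h : (i : ℕ) + 1 < n then μ i * v ⟨(i : ℕ) + 1, h⟩ else 0) := by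
        rw [Finset.sum_add_distrib, h1, h2]
    _ = μ i * ((if h : (i : ℕ) + 1 < n then v ⟨(i : ℕ) + 1, h⟩ else 0) - v i) := by
        by_cases h : (i : ℕ) + 1 < n <;> simp [h] <;> ring

lemma powVec_support (μ : Fin n → ℝ) (hpos : ∀ i, 0 < μ i) :
    ∀ k : ℕ, 1 ≤ k →
      (∀ i : Fin n, (i : ℕ) + k < n → ((canonD μ) ^ k *ᵥ fun _ => 1) i = 0) ∧
      (∀ i : Fin n, (i : ℕ) + k = n → ((canonD μ) ^ k *ᵥ fun _ => 1) i ≠ 0) := by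
  intro k hk
  induction k with
  | zero => omega
  | succ k ih =>
    rcases Nat.eq_zero_or_pos k with hk0 | hk1
    · subst hk0
      constructor
      · intro i hi
        rw [pow_one, canonD_mulVec, dif_pos (by omega)]
        ring
      · intro i hi
        rw [pow_one, canonD_mulVec, dif_neg (by omega)]
        have := (hpos i).ne'
        intro hc
        have : μ i * (0 - 1) = -μ i := by ring
        simp only [this] at hc
        simp only [neg_eq_zero] at hc
        exact (hpos i).ne' hc
    · obtain ⟨hz, hnz⟩ := ih hk1
      have hrw : ((canonD μ) ^ (k + 1) *ᵥ fun _ => 1)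
          = canonD μ *ᵥ ((canonD μ) ^ k *ᵥ fun _ => 1) := by
        rw [Matrix.mulVec_mulVec, ← pow_succ']
      constructor
      · intro i hi
        rw [hrw, canonD_mulVec]
        have hi1 : (i : ℕ) + 1 < n := by omega
        rw [dif_pos hi1, hz ⟨(i : ℕ) + 1, hi1⟩ (by simp; omega), hz i (by omega)]
        ring
      · intro i hi
        rw [hrw, canonD_mulVec]
        have hi1 : (i : ℕ) + 1 < n := by omega
        rw [dif_pos hi1, hz i (by omega)]
        have hnzv := hnz ⟨(i : ℕ) + 1, hi1⟩ (by simp; omega)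
        intro hc
        rcases mul_eq_zero.mp (by linarith [hc] : μ i * (((canonD μ) ^ k *ᵥ fun _ => 1) ⟨(i : ℕ) + 1, hi1⟩ - 0) = 0) with h | h
        · exact (hpos i).ne' h
        · exact hnzv (by linarith)

lemma vec_eq_zero (μ : Fin n → ℝ) (hpos : ∀ i, 0 < μ i) (w : Fin n → ℝ)
    (hw : ∀ k : ℕ, w ⬝ᵥ ((canonD μ) ^ k *ᵥ fun _ => 1) = 0) : w = 0 := by
  classical
  have key : ∀ m : ℕ, ∀ i : Fin n, n ≤ (i : ℕ) + 1 + m → w i = 0 := by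
    intro m
    induction m using Nat.strong_induction_on with
    | _ m ih =>
      intro i hi
      have hilt := i.isLt
      set k := n - (i : ℕ) with hkdef
      have hik : (i : ℕ) + k = n := by omega
      have hk1 : 1 ≤ k := by omega
      obtain ⟨hz, hnz⟩ := powVec_support μ hpos k hk1
      have hdot := hw k
      rw [dotProduct] at hdot
      have hsum : ∑ j, w j * ((canonD μ) ^ k *ᵥ fun _ => 1) j
          = w i * ((canonD μ) ^ k *ᵥ fun _ => 1) i := by
        apply Finset.sum_eq_single_of_mem i (Finset.mem_univ i)
        intro j _ hji
        have hjlt := j.isLt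
        rcases lt_trichotomy ((j : ℕ) + k) n with h | h | h
        · rw [hz j h, mul_zero]
        · exact absurd (Fin.ext (by omega)) hji
        · have hm1 : 1 ≤ m := by omega
          rw [ih (m - 1) (by omega) j (by omega), zero_mul]
      rw [hsum] at hdot
      rcases mul_eq_zero.mp hdot with h | h
      · exact h
      · exact absurd h (hnz i hik)
  funext i
  exact key n i (by omega)

lemma hasDerivAt_dot (π v : Fin n → ℝ) (D : Matrix (Fin n) (Fin n) ℝ) (t : ℝ) :
    HasDerivAt (fun u : ℝ => (π ᵥ* exp (u • D)) ⬝ᵥ v)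
      ((π ᵥ* exp (t • D)) ⬝ᵥ (D *ᵥ v)) t := by
  classical
  let L : Matrix (Fin n) (Fin n) ℝ →ₗ[ℝ] ℝ :=
    { toFun := fun A => π ⬝ᵥ (A *ᵥ v)
      map_add' := by
        intro A B
        show π ⬝ᵥ ((A + B) *ᵥ v) = π ⬝ᵥ (A *ᵥ v) + π ⬝ᵥ (B *ᵥ v)
        rw [Matrix.add_mulVec, dotProduct_add]
      map_smul' := by
        intro c A
        show π ⬝ᵥ ((c • A) *ᵥ v) = c • (π ⬝ᵥ (A *ᵥ v))
        rw [Matrix.smul_mulVec, dotProduct_smul] }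
  have hL : Continuous L := LinearMap.continuous_of_finiteDimensional L
  let Lc : Matrix (Fin n) (Fin n) ℝ →L[ℝ] ℝ := ⟨L, hL⟩
  have h1 : HasDerivAt (fun u : ℝ => exp (u • D)) (exp (t • D) * D) t :=
    hasDerivAt_exp_smul_const D t
  have h2 : HasDerivAt (fun u : ℝ => Lc (exp (u • D))) (Lc (exp (t • D) * D)) t := by
    have h : HasDerivAt (fun u : ℝ => Lc (exp (u • D))) (Lc (exp (t • D) * D)) t :=
      Lc.hasFDerivAt.comp_hasDerivAt t h1
    simpa [Function.comp] using h
  have hfun : (fun u : ℝ => Lc (exp (u • D)))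
      = fun u : ℝ => (π ᵥ* exp (u • D)) ⬝ᵥ v := by
    funext u
    exact (Matrix.dotProduct_mulVec π _ v).symm ▸ rfl
  have hval : Lc (exp (t • D) * D) = (π ᵥ* exp (t • D)) ⬝ᵥ (D *ᵥ v) := by
    show π ⬝ᵥ ((exp (t • D) * D) *ᵥ v) = _
    rw [← Matrix.mulVec_mulVec, Matrix.dotProduct_mulVec]
  rw [← hfun, ← hval]
  exact h2

end StmtAux

theorem stmt2 {n : ℕ} (hn : 0 < n) (μ : Fin n → ℝ) (hpos : ∀ i, 0 < μ i)
    (hmono : Monotone μ) (π : Fin n → ℝ) (hnonneg : ∀ i, 0 ≤ π i)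
    (hsum : ∑ i, π i = 1) (hrep : ReprUnitExp π (canonD μ)) :
    (∀ t : ℝ, 0 ≤ t →
        π ᵥ* NormedSpace.exp (t • canonD μ) = Real.exp (-t) • π) ∧
      π ᵥ* canonD μ = -π ∧
      π ᵥ* (canonD μ +
          Matrix.vecMulVec ((-(canonD μ)) *ᵥ (fun _ => 1)) π) = 0 := by
  classical
  open NormedSpace StmtAux in
  set D := canonD μ with hD
  -- Step 1: the successive "derivative" identities on (0, ∞)
  have hFk : ∀ k : ℕ, ∀ t : ℝ, 0 < t →
      (π ᵥ* exp (t • D)) ⬝ᵥ (D ^ k *ᵥ fun _ => 1) = (-1) ^ k * Real.exp (-t) := by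
    intro k
    induction k with
    | zero =>
      intro t ht
      rw [pow_zero, Matrix.one_mulVec, pow_zero, one_mul]
      exact hrep t ht.le
    | succ k ih =>
      intro t ht
      have hder : HasDerivAt (fun u : ℝ => (π ᵥ* exp (u • D)) ⬝ᵥ (D ^ k *ᵥ fun _ => 1))
          ((π ᵥ* exp (t • D)) ⬝ᵥ (D ^ (k + 1) *ᵥ fun _ => 1)) t := by
        have := hasDerivAt_dot π (D ^ k *ᵥ fun _ => 1) D t
        rwa [Matrix.mulVec_mulVec, ← pow_succ'] at this
      have heq : (fun u : ℝ => (π ᵥ* exp (u • D)) ⬝ᵥ (D ^ k *ᵥ fun _ => 1))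
          =ᶠ[nhds t] fun u : ℝ => (-1) ^ k * Real.exp (-u) := by
        filter_upwards [IsOpen.mem_nhds isOpen_Ioi ht] with u hu
        exact ih u hu
      have hder2 : HasDerivAt (fun u : ℝ => (-1 : ℝ) ^ k * Real.exp (-u))
          ((π ᵥ* exp (t • D)) ⬝ᵥ (D ^ (k + 1) *ᵥ fun _ => 1)) t :=
        hder.congr_of_eventuallyEq heq.symm
      have hder3 : HasDerivAt (fun u : ℝ => (-1 : ℝ) ^ k * Real.exp (-u))
          ((-1) ^ (k + 1) * Real.exp (-t)) t := by
        have h : HasDerivAt (fun u : ℝ => (-1 : ℝ) ^ k * Real.exp (-u))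
            ((-1 : ℝ) ^ k * (Real.exp (-t) * -1)) t :=
          ((Real.hasDerivAt_exp (-t)).comp t (hasDerivAt_neg t)).const_mul
          ((-1 : ℝ) ^ k)
        convert h using 1
        ring
      rw [hder2.unique hder3]
  -- at t = 1
  have hσ : ∀ k : ℕ, (π ᵥ* exp D) ⬝ᵥ (D ^ k *ᵥ fun _ => 1) = (-1) ^ k * Real.exp (-1) := by
    intro k
    have := hFk k 1 one_pos
    rwa [one_smul] at this
  -- Step 2: σ D = -σ where σ = π exp(D)
  set σ := π ᵥ* exp D with hσdef
  have hw : σ ᵥ* D + σ = 0 := by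
    apply vec_eq_zero μ hpos
    intro k
    have h1 : (σ ᵥ* D) ⬝ᵥ (D ^ k *ᵥ fun _ => 1) = σ ⬝ᵥ (D ^ (k + 1) *ᵥ fun _ => 1) := by
      rw [← Matrix.dotProduct_mulVec, Matrix.mulVec_mulVec, ← pow_succ']
    rw [add_dotProduct, h1, hσ (k + 1), hσ k]
    ring
  have hσD : σ ᵥ* D = -σ := by
    have := hw
    linear_combination (norm := module) this
  -- Step 3: π D = -π
  have hexpinv : exp D * exp (-D) = 1 := by
    rw [← Matrix.exp_add_of_commute D (-D) (Commute.neg_right (Commute.refl D))]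
    simp [exp_zero]
  have hπσ : σ ᵥ* exp (-D) = π := by
    rw [hσdef, Matrix.vecMul_vecMul, hexpinv, Matrix.vecMul_one]
  have hcomm : exp (-D) * D = D * exp (-D) := by
    have : Commute D (exp (-D)) := Commute.exp_right (Commute.neg_right (Commute.refl D))
    exact this.symm
  have hπD : π ᵥ* D = -π := by
    rw [← hπσ, Matrix.vecMul_vecMul, hcomm, ← Matrix.vecMul_vecMul, hσD,
      Matrix.neg_vecMul, hπσ]
  -- Step 4: π D^k = (-1)^k π
  have hπpow : ∀ k : ℕ, π ᵥ* (D ^ k) = (-1 : ℝ) ^ k • π := by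
    intro k
    induction k with
    | zero => simp [Matrix.vecMul_one]
    | succ k ih =>
      rw [pow_succ, ← Matrix.vecMul_vecMul, ih, Matrix.smul_vecMul, hπD, pow_succ]
      ext i
      simp [mul_comm]
  -- Step 5: π exp(tD) = e^{-t} π for all t
  have hmain : ∀ t : ℝ, π ᵥ* exp (t • D) = Real.exp (-t) • π := by
    intro t
    let L : Matrix (Fin n) (Fin n) ℝ →ₗ[ℝ] (Fin n → ℝ) :=
      { toFun := fun A => π ᵥ* A
        map_add' := fun A B => Matrix.vecMul_add A B π
        map_smul' := by
          intro c A
          ext j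
          simp [Matrix.vecMul, dotProduct, Finset.mul_sum]
          exact Finset.sum_congr rfl fun i _ => by ring }
    have hL : Continuous L := LinearMap.continuous_of_finiteDimensional L
    let Lc : Matrix (Fin n) (Fin n) ℝ →L[ℝ] (Fin n → ℝ) := ⟨L, hL⟩
    have hsummable : Summable fun k : ℕ => ((Nat.factorial k : ℝ))⁻¹ • (t • D) ^ k :=
      NormedSpace.expSeries_summable' (t • D)
    have h1 : π ᵥ* exp (t • D) = ∑' k : ℕ, Lc (((Nat.factorial k : ℝ))⁻¹ • (t • D) ^ k) := by
      rw [exp_eq_tsum ℝ]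
      exact (Lc.map_tsum hsummable)
    have h2 : ∀ k : ℕ, Lc (((Nat.factorial k : ℝ))⁻¹ • (t • D) ^ k)
        = (((Nat.factorial k : ℝ))⁻¹ * (-t) ^ k) • π := by
      intro k
      show π ᵥ* (((Nat.factorial k : ℝ))⁻¹ • (t • D) ^ k) = _
      have : (t • D) ^ k = (t ^ k) • (D ^ k) := smul_pow t D k
      rw [this, smul_smul]
      have hsm : ∀ (c : ℝ) (A : Matrix (Fin n) (Fin n) ℝ), π ᵥ* (c • A) = c • (π ᵥ* A) := by
        intro c A
        ext j
        simp [Matrix.vecMul, dotProduct, Finset.mul_sum]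
        exact Finset.sum_congr rfl fun i _ => by ring
      rw [hsm, hπpow k, smul_smul]
      congr 1
      rw [mul_assoc]
      congr 1
      rw [← mul_pow]
      congr 1
      ring
    rw [h1]
    have h3 : ∑' k : ℕ, Lc (((Nat.factorial k : ℝ))⁻¹ • (t • D) ^ k)
        = ∑' k : ℕ, (((Nat.factorial k : ℝ))⁻¹ * (-t) ^ k) • π := by
      exact tsum_congr h2
    rw [h3]
    have hsummable2 : Summable fun k : ℕ => ((Nat.factorial k : ℝ))⁻¹ * (-t) ^ k := by
      have := NormedSpace.expSeries_summable' (𝕂 := ℝ) (-t)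
      simpa [smul_eq_mul] using this
    rw [hsummable2.tsum_smul_const]
    congr 1
    rw [Real.exp_eq_exp_ℝ, exp_eq_tsum ℝ]
    exact (tsum_congr fun k => by simp [smul_eq_mul]).symm
  refine ⟨fun t _ => hmain t, hπD, ?_⟩
  -- Step 6
  have hdot1 : π ⬝ᵥ ((-D) *ᵥ fun _ => 1) = 1 := by
    rw [Matrix.dotProduct_mulVec, Matrix.vecMul_neg, hπD, neg_neg]
    simpa [dotProduct] using hsum
  have hvmv : π ᵥ* Matrix.vecMulVec ((-D) *ᵥ fun _ => 1) π
      = (π ⬝ᵥ ((-D) *ᵥ fun _ => 1)) • π := by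
    ext j
    simp [Matrix.vecMul, Matrix.vecMulVec_apply, dotProduct, Finset.sum_mul]
    exact Finset.sum_congr rfl fun i _ => by ring
  rw [Matrix.vecMul_add, hπD, hvmv, hdot1, one_smul]
  simp
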